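/- Let ℓ' be a nonzero vector in T ⊕ ℚℓ with ℓ' ∉ ℚℓ. The set of points on the conic {[σ'] ∈ ℙ(ℂσ ⊕ ℂ·conj σ ⊕ ℂℓ) : (σ'.σ') = 0} orthogonal to ℓ' consists of exactly two distinct points, and they are exchanged by complex conjugation: if z = [aσ + b·conj σ + ℓ] is one of them, the other is [conj(b)σ + conj(a)·conj σ + ℓ]. -/

import Mathlib

/-- For `ℓ' ∈ T ⊕ ℚℓ` nonzero and not a multiple of `ℓ` (encoded by its periods
`p = (σ.ℓ') ≠ 0`, `(conjσ.ℓ') = conj p`, and real `q = (ℓ.ℓ')`), the points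
`[aσ + b·conjσ + ℓ]` of the conic orthogonal to `ℓ'` form exactly a pair of two
distinct points exchanged by conjugation `(a,b) ↦ (conj b, conj a)`. -/
theorem stmt15 (s d : ℝ) (hs : 0 < s) (hd : 0 < d)
    (p q : ℂ) (hp : p ≠ 0) (hq : q.im = 0) :
    ∃ a b : ℂ,
      (a, b) ≠ ((starRingEnd ℂ) b, (starRingEnd ℂ) a) ∧
      {x : ℂ × ℂ | 2 * x.1 * x.2 * (s : ℂ) + (d : ℂ) = 0 ∧
          x.1 * p + x.2 * (starRingEnd ℂ) p + q = 0}
        = {(a, b), ((starRingEnd ℂ) b, (starRingEnd ℂ) a)} := by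
  have hs' : (s : ℂ) ≠ 0 := by exact_mod_cast hs.ne'
  have hp' : (starRingEnd ℂ) p ≠ 0 := by simpa using hp
  set P : ℝ := Complex.normSq p with hPdef
  have hP : 0 < P := Complex.normSq_pos.2 hp
  have hPc : (P : ℂ) = p * (starRingEnd ℂ) p := (Complex.mul_conj p).symm
  set D : ℝ := q.re ^ 2 + 2 * d * P / s with hDdef
  have hD : 0 < D := by positivity
  set r : ℝ := Real.sqrt D with hrdef
  have hr : 0 < r := Real.sqrt_pos.2 hD
  have hr2 : r ^ 2 = D := Real.sq_sqrt hD.le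
  set t₁ : ℝ := (-q.re + r) / 2 with ht₁
  set t₂ : ℝ := (-q.re - r) / 2 with ht₂
  have ht : t₁ ≠ t₂ := by
    intro h
    have : r = 0 := by rw [ht₁, ht₂] at h; linarith
    exact hr.ne' this
  have hqre : (q.re : ℂ) = q := by
    apply Complex.ext <;> simp [hq]
  have hsum : (t₁ : ℂ) + (t₂ : ℂ) = -q := by
    rw [← hqre]; push_cast [ht₁, ht₂]; ring
  have hprodR : 2 * (t₁ * t₂) * s + d * P = 0 := by
    have h1 : t₁ * t₂ = (q.re ^ 2 - r ^ 2) / 4 := by rw [ht₁, ht₂]; ring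
    rw [h1, hr2, hDdef]
    field_simp
    ring
  have hprod : 2 * ((t₁ : ℂ) * (t₂ : ℂ)) * (s : ℂ) + (d : ℂ) * (P : ℂ) = 0 := by
    exact_mod_cast hprodR
  refine ⟨(t₁ : ℂ) / p, (t₂ : ℂ) / (starRingEnd ℂ) p, ?_, ?_⟩
  · intro h
    have h1 := congrArg Prod.fst h
    simp only [map_div₀, Complex.conj_ofReal, Complex.conj_conj] at h1
    field_simp at h1
    exact ht (by exact_mod_cast h1)
  · have hconjb : (starRingEnd ℂ) ((t₂ : ℂ) / (starRingEnd ℂ) p) = (t₂ : ℂ) / p := by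
      simp [map_div₀]
    have hconja : (starRingEnd ℂ) ((t₁ : ℂ) / p) = (t₁ : ℂ) / (starRingEnd ℂ) p := by
      simp [map_div₀]
    ext x
    simp only [Set.mem_setOf_eq, Set.mem_insert_iff, Set.mem_singleton_iff, hconjb, hconja,
      Prod.ext_iff]
    constructor
    · rintro ⟨hx1, hx2⟩
      set u : ℂ := x.1 * p with hu
      set v : ℂ := x.2 * (starRingEnd ℂ) p with hv
      have huv : u + v = -q := by linear_combination hx2
      have huv2 : u * v = (t₁ : ℂ) * (t₂ : ℂ) := by
        have h2 : u * v * (2 * s) = -(d : ℂ) * P := by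
          rw [hPc]; linear_combination (p * (starRingEnd ℂ) p) * hx1
        have h3 : ((t₁ : ℂ) * t₂) * (2 * s) = -(d : ℂ) * P := by linear_combination hprod
        have h4 : (2 * (s : ℂ)) ≠ 0 := by
          simp only [ne_eq, mul_eq_zero]; push_neg; exact ⟨two_ne_zero, hs'⟩
        exact mul_right_cancel₀ h4 (h2.trans h3.symm)
      have hfac : (u - t₁) * (u - t₂) = 0 := by
        linear_combination u * huv - huv2 - u * hsum
      rcases mul_eq_zero.1 hfac with h | h
      · left
        have hv2 : v = (t₂ : ℂ) := by linear_combination huv - hsum - h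
        constructor
        · rw [eq_div_iff hp]; exact sub_eq_zero.1 h
        · rw [eq_div_iff hp']; exact hv2
      · right
        have hv2 : v = (t₁ : ℂ) := by linear_combination huv - hsum - h
        constructor
        · rw [eq_div_iff hp]; exact sub_eq_zero.1 h
        · rw [eq_div_iff hp']; exact hv2
    · rintro (⟨h1, h2⟩ | ⟨h1, h2⟩) <;> rw [h1, h2]
      · constructor
        · field_simp
          linear_combination hprod - (d : ℂ) * hPc
        · rw [div_mul_cancel₀ _ hp, div_mul_cancel₀ _ hp']
          linear_combination hsum
      · constructor
        · field_simp
          linear_combination hprod - (d : ℂ) * hPc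
        · rw [div_mul_cancel₀ _ hp, div_mul_cancel₀ _ hp']
          linear_combination hsum
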